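/- Let ι be a finite type, equip real ι × ι matrices with the norm ‖A‖ = max_i Σ_j |A_{ij}| (the L∞ operator norm). Let Q be a real ι × ι matrix, (c_N) a sequence of positive reals with c_N → 0, and (P_N) a sequence of real ι × ι matrices such that ‖P_N‖ ≤ 1 for all N, ‖I + c_N Q‖ ≤ 1 for all sufficiently large N, and ‖P_N − (I + c_N Q)‖ / c_N → 0 as N → ∞. Then for every t ≥ 0, P_N^{⌊t/c_N⌋} → exp(tQ) as N → ∞. -/

import Mathlib

open Filter Nat

attribute [local instance] Matrix.linftyOpNormedRing Matrix.linftyOpNormedAlgebra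

section Aux

variable {𝔸 : Type*} [NormedRing 𝔸] [NormOneClass 𝔸] [NormedAlgebra ℝ 𝔸] [CompleteSpace 𝔸]

/-- Telescoping bound on the difference of powers. -/
lemma aux_norm_pow_sub_pow_le (A B : 𝔸) {M : ℝ} (hM : 1 ≤ M)
    (hA : ‖A‖ ≤ M) (hB : ‖B‖ ≤ M) (k : ℕ) :
    ‖A ^ k - B ^ k‖ ≤ k * M ^ k * ‖A - B‖ := by
  induction k with
  | zero => simp
  | succ k ih =>
    have hM0 : (0 : ℝ) ≤ M := le_trans zero_le_one hM
    have key : A ^ (k + 1) - B ^ (k + 1) = A * (A ^ k - B ^ k) + (A - B) * B ^ k := by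
      rw [_root_.pow_succ', _root_.pow_succ']
      noncomm_ring
    rcases Nat.eq_zero_or_pos k with hk0 | hk0
    · subst hk0
      simp only [zero_add, pow_one, Nat.cast_one, one_mul]
      nlinarith [norm_nonneg (A - B)]
    have hBk : ‖B ^ k‖ ≤ M ^ k := by
      calc ‖B ^ k‖ ≤ ‖B‖ ^ k := norm_pow_le' _ hk0
        _ ≤ M ^ k := pow_le_pow_left₀ (norm_nonneg _) hB k
    calc ‖A ^ (k + 1) - B ^ (k + 1)‖
        ≤ ‖A * (A ^ k - B ^ k)‖ + ‖(A - B) * B ^ k‖ := by rw [key]; exact norm_add_le _ _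
      _ ≤ ‖A‖ * ‖A ^ k - B ^ k‖ + ‖A - B‖ * ‖B ^ k‖ :=
          _root_.add_le_add (norm_mul_le _ _) (norm_mul_le _ _)
      _ ≤ M * (k * M ^ k * ‖A - B‖) + ‖A - B‖ * M ^ k := by
          apply _root_.add_le_add
          · exact mul_le_mul hA ih (norm_nonneg _) hM0
          · exact mul_le_mul_of_nonneg_left hBk (norm_nonneg _)
      _ ≤ ((k : ℝ) + 1) * M ^ (k + 1) * ‖A - B‖ := by
          have hk : (0:ℝ) ≤ (k : ℝ) := Nat.cast_nonneg k
          rw [pow_succ]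
          nlinarith [mul_nonneg (pow_nonneg hM0 k) (norm_nonneg (A - B)),
            norm_nonneg (A - B), pow_nonneg hM0 k]
      _ = ((k + 1 : ℕ) : ℝ) * M ^ (k + 1) * ‖A - B‖ := by push_cast; ring

lemma aux_real_exp_tsum (r : ℝ) : Real.exp r = ∑' n : ℕ, r ^ n / n ! := by
  rw [Real.exp_eq_exp_ℝ, NormedSpace.exp_eq_tsum_div]

lemma aux_norm_term_le (x : 𝔸) (n : ℕ) (hn : 0 < n) :
    ‖(n !⁻¹ : ℝ) • x ^ n‖ ≤ ‖x‖ ^ n / n ! := by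
  rw [norm_smul, Real.norm_eq_abs, abs_of_nonneg (by positivity : (0:ℝ) ≤ (n !⁻¹ : ℝ))]
  rw [div_eq_inv_mul]
  exact mul_le_mul_of_nonneg_left (norm_pow_le' x hn) (by positivity)

/-- `‖exp x‖ ≤ exp ‖x‖` in a real Banach algebra. -/
lemma aux_norm_exp_le (x : 𝔸) : ‖NormedSpace.exp x‖ ≤ Real.exp ‖x‖ := by
  rw [NormedSpace.exp_eq_tsum ℝ, aux_real_exp_tsum]
  refine tsum_of_norm_bounded (g := fun n : ℕ => ‖x‖ ^ n / n !) ?_ ?_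
  · exact (Real.summable_pow_div_factorial ‖x‖).hasSum
  · intro n
    rcases Nat.eq_zero_or_pos n with h | h
    · subst h
      simp
    · exact aux_norm_term_le x n h

set_option maxHeartbeats 1000000 in
/-- Second-order remainder bound for the exponential. -/
lemma aux_exp_remainder (x : 𝔸) :
    ‖NormedSpace.exp x - 1 - x‖ ≤ ‖x‖ ^ 2 * Real.exp ‖x‖ := by
  have hf : Summable (fun n : ℕ => (n !⁻¹ : ℝ) • x ^ n) := NormedSpace.expSeries_summable' x
  have hf1 : Summable (fun n : ℕ => ((n + 1)!⁻¹ : ℝ) • x ^ (n + 1)) :=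
    (summable_nat_add_iff 1).2 hf
  have hf2 : Summable (fun n : ℕ => ((n + 2)!⁻¹ : ℝ) • x ^ (n + 2)) :=
    (summable_nat_add_iff 2).2 hf
  have hsplit : NormedSpace.exp x - 1 - x = ∑' n : ℕ, ((n + 2)!⁻¹ : ℝ) • x ^ (n + 2) := by
    simp only [NormedSpace.exp_eq_tsum ℝ]
    rw [Summable.tsum_eq_zero_add hf, Summable.tsum_eq_zero_add hf1]
    simp [Nat.factorial]
  rw [hsplit]
  have hmaj : ∀ n : ℕ, ‖((n + 2)!⁻¹ : ℝ) • x ^ (n + 2)‖ ≤ ‖x‖ ^ 2 * (‖x‖ ^ n / n !) := by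
    intro n
    calc ‖((n + 2)!⁻¹ : ℝ) • x ^ (n + 2)‖ ≤ ‖x‖ ^ (n + 2) / (n + 2)! :=
          aux_norm_term_le x (n + 2) (by omega)
      _ ≤ ‖x‖ ^ (n + 2) / n ! := by
          apply div_le_div_of_nonneg_left ?_ ?_ ?_
          · positivity
          · exact_mod_cast Nat.factorial_pos n
          · exact_mod_cast Nat.factorial_le (by omega)
      _ = ‖x‖ ^ 2 * (‖x‖ ^ n / n !) := by ring
  have hsum : Summable (fun n : ℕ => ‖x‖ ^ 2 * (‖x‖ ^ n / n !)) :=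
    (Real.summable_pow_div_factorial ‖x‖).mul_left _
  calc ‖∑' n : ℕ, ((n + 2)!⁻¹ : ℝ) • x ^ (n + 2)‖
      ≤ ∑' n : ℕ, ‖x‖ ^ 2 * (‖x‖ ^ n / n !) := tsum_of_norm_bounded hsum.hasSum hmaj
    _ = ‖x‖ ^ 2 * ∑' n : ℕ, ‖x‖ ^ n / n ! := tsum_mul_left
    _ = ‖x‖ ^ 2 * Real.exp ‖x‖ := by rw [aux_real_exp_tsum]

end Aux

/-- If `‖P_N‖ ≤ 1`, `‖I + c_N Q‖ ≤ 1` for large `N` (in the `L∞` operator norm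
`‖A‖ = max_i Σ_j |A_{ij}|`), `c_N → 0` with `c_N > 0`, and
`‖P_N − (I + c_N Q)‖/c_N → 0`, then `P_N^{⌊t/c_N⌋} → exp(tQ)` for every `t ≥ 0`. -/
theorem transition_matrix_powers_limit {ι : Type*} [Fintype ι] [DecidableEq ι]
    (Q : Matrix ι ι ℝ) (c : ℕ → ℝ) (P : ℕ → Matrix ι ι ℝ)
    (hc_pos : ∀ N, 0 < c N) (hc : Tendsto c atTop (nhds 0))
    (hP : ∀ N, ‖P N‖ ≤ 1)
    (hIQ : ∀ᶠ N in atTop, ‖(1 : Matrix ι ι ℝ) + c N • Q‖ ≤ 1)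
    (happrox : Tendsto (fun N => ‖P N - ((1 : Matrix ι ι ℝ) + c N • Q)‖ / c N) atTop (nhds 0)) :
    ∀ t : ℝ, 0 ≤ t →
      Tendsto (fun N : ℕ => P N ^ ⌊t / c N⌋₊) atTop (nhds (NormedSpace.exp (t • Q))) := by
  intro t ht
  rcases isEmpty_or_nonempty ι with hι | hι
  · have hsub : ∀ A B : Matrix ι ι ℝ, A = B := fun A B => by
      ext i j; exact (hι.false i).elim
    have : (fun N : ℕ => P N ^ ⌊t / c N⌋₊) = fun _ => NormedSpace.exp (t • Q) :=
      funext fun N => hsub _ _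
    rw [this]; exact tendsto_const_nhds
  haveI : CompleteSpace (Matrix ι ι ℝ) := FiniteDimensional.complete ℝ _
  set q : ℝ := ‖Q‖ with hqdef
  have hq : 0 ≤ q := norm_nonneg Q
  set k : ℕ → ℕ := fun N => ⌊t / c N⌋₊ with hkdef
  -- basic facts about k N * c N
  have hkc_le : ∀ N, (k N : ℝ) * c N ≤ t := by
    intro N
    have h1 : (k N : ℝ) ≤ t / c N := Nat.floor_le (div_nonneg ht (hc_pos N).le)
    calc (k N : ℝ) * c N ≤ t / c N * c N :=
          mul_le_mul_of_nonneg_right h1 (hc_pos N).le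
      _ = t := div_mul_cancel₀ t (hc_pos N).ne'
  have hkc_gt : ∀ N, t - c N < (k N : ℝ) * c N := by
    intro N
    have h1 : t / c N < (k N : ℝ) + 1 := Nat.lt_floor_add_one (t / c N)
    have h2 : t < ((k N : ℝ) + 1) * c N := by
      have := mul_lt_mul_of_pos_right h1 (hc_pos N)
      rwa [div_mul_cancel₀ t (hc_pos N).ne'] at this
    nlinarith
  have hkc_tendsto : Tendsto (fun N => (k N : ℝ) * c N) atTop (nhds t) := by
    have hlow : Tendsto (fun N => t - c N) atTop (nhds t) := by
      simpa using (tendsto_const_nhds (x := t)).sub hc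
    exact tendsto_of_tendsto_of_tendsto_of_le_of_le hlow tendsto_const_nhds
      (fun N => (hkc_gt N).le) hkc_le
  have htends3 : Tendsto (fun N => NormedSpace.exp (((k N : ℝ) * c N) • Q)) atTop
      (nhds (NormedSpace.exp (t • Q))) :=
    (NormedSpace.exp_continuous.tendsto (t • Q)).comp (hkc_tendsto.smul_const Q)
  have hEpow : ∀ N, NormedSpace.exp (c N • Q) ^ k N
      = NormedSpace.exp (((k N : ℝ) * c N) • Q) := by
    intro N
    rw [← Matrix.exp_nsmul]
    congr 1
    rw [← Nat.cast_smul_eq_nsmul ℝ, smul_smul]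
  set g : ℕ → ℝ := fun N =>
    t * (‖P N - ((1 : Matrix ι ι ℝ) + c N • Q)‖ / c N)
      + t * q ^ 2 * Real.exp ((t + 1) * q) * c N
      + ‖NormedSpace.exp (((k N : ℝ) * c N) • Q) - NormedSpace.exp (t • Q)‖ with hgdef
  have hg : Tendsto g atTop (nhds 0) := by
    have h1 : Tendsto (fun N => t * (‖P N - ((1 : Matrix ι ι ℝ) + c N • Q)‖ / c N)) atTop
        (nhds 0) := by simpa using happrox.const_mul t
    have h2 : Tendsto (fun N => t * q ^ 2 * Real.exp ((t + 1) * q) * c N) atTop (nhds 0) := by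
      simpa using hc.const_mul (t * q ^ 2 * Real.exp ((t + 1) * q))
    have h3 : Tendsto (fun N => ‖NormedSpace.exp (((k N : ℝ) * c N) • Q)
        - NormedSpace.exp (t • Q)‖) atTop (nhds 0) :=
      tendsto_iff_norm_sub_tendsto_zero.mp htends3
    simpa using (h1.add h2).add h3
  have hcsmall : ∀ᶠ N in atTop, c N ≤ 1 :=
    (hc.eventually (eventually_le_nhds one_pos)).mono fun N h => h
  have hbound : ∀ᶠ N in atTop, ‖P N ^ k N - NormedSpace.exp (t • Q)‖ ≤ g N := by
    filter_upwards [hIQ, hcsmall] with N hIQN hc1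
    set A : Matrix ι ι ℝ := (1 : Matrix ι ι ℝ) + c N • Q with hAdef
    set E : Matrix ι ι ℝ := NormedSpace.exp (c N • Q) with hEdef
    have hcN : 0 < c N := hc_pos N
    have hnormcQ : ‖c N • Q‖ = c N * q := by
      rw [norm_smul, Real.norm_eq_abs, abs_of_pos hcN]
    set M : ℝ := Real.exp (c N * q) with hMdef
    have hM1 : 1 ≤ M := Real.one_le_exp (by positivity)
    have hM0 : 0 ≤ M := zero_le_one.trans hM1
    have hEle : ‖E‖ ≤ M := by
      rw [hEdef, hMdef, ← hnormcQ]; exact aux_norm_exp_le _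
    -- Term 1
    have hT1 : ‖P N ^ k N - A ^ k N‖ ≤ t * (‖P N - A‖ / c N) := by
      have h1 : ‖P N ^ k N - A ^ k N‖ ≤ (k N : ℝ) * 1 ^ k N * ‖P N - A‖ :=
        aux_norm_pow_sub_pow_le (P N) A le_rfl (hP N) hIQN (k N)
      have h2 : (k N : ℝ) * c N * (‖P N - A‖ / c N) = (k N : ℝ) * ‖P N - A‖ := by
        field_simp
      have h3 : (k N : ℝ) * c N * (‖P N - A‖ / c N) ≤ t * (‖P N - A‖ / c N) :=
        mul_le_mul_of_nonneg_right (hkc_le N) (by positivity)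
      rw [one_pow, mul_one] at h1
      linarith
    -- Term 2
    have hT2 : ‖A ^ k N - E ^ k N‖ ≤ t * q ^ 2 * Real.exp ((t + 1) * q) * c N := by
      have h2 : ‖A ^ k N - E ^ k N‖ ≤ (k N : ℝ) * M ^ k N * ‖A - E‖ :=
        aux_norm_pow_sub_pow_le A E hM1 (hIQN.trans hM1) hEle (k N)
      have hAE : ‖A - E‖ ≤ (c N * q) ^ 2 * M := by
        have : A - E = -(E - 1 - c N • Q) := by rw [hAdef]; abel
        rw [this, norm_neg]
        calc ‖E - 1 - c N • Q‖ ≤ ‖c N • Q‖ ^ 2 * Real.exp ‖c N • Q‖ :=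
              aux_exp_remainder _
          _ = (c N * q) ^ 2 * M := by rw [hnormcQ, hMdef]
      have hMk : M ^ k N ≤ Real.exp (t * q) := by
        rw [hMdef, ← Real.exp_nat_mul]
        apply Real.exp_le_exp.2
        calc (k N : ℝ) * (c N * q) = (k N : ℝ) * c N * q := by ring
          _ ≤ t * q := mul_le_mul_of_nonneg_right (hkc_le N) hq
      have hexpM : Real.exp (t * q) * M ≤ Real.exp ((t + 1) * q) := by
        rw [hMdef, ← Real.exp_add]
        apply Real.exp_le_exp.2
        nlinarith
      calc ‖A ^ k N - E ^ k N‖ ≤ (k N : ℝ) * M ^ k N * ‖A - E‖ := h2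
        _ ≤ (k N : ℝ) * Real.exp (t * q) * ((c N * q) ^ 2 * M) := by
            apply mul_le_mul (mul_le_mul_of_nonneg_left hMk (Nat.cast_nonneg _)) hAE
              (norm_nonneg _) (by positivity)
        _ = (k N : ℝ) * c N * (q ^ 2 * (Real.exp (t * q) * M)) * c N := by ring
        _ ≤ t * (q ^ 2 * Real.exp ((t + 1) * q)) * c N := by
            apply mul_le_mul_of_nonneg_right _ hcN.le
            exact mul_le_mul (hkc_le N)
              (mul_le_mul_of_nonneg_left hexpM (by positivity)) (by positivity) ht
        _ = t * q ^ 2 * Real.exp ((t + 1) * q) * c N := by ring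
    calc ‖P N ^ k N - NormedSpace.exp (t • Q)‖
        ≤ ‖P N ^ k N - A ^ k N‖ + ‖A ^ k N - NormedSpace.exp (t • Q)‖ :=
          norm_sub_le_norm_sub_add_norm_sub _ _ _
      _ ≤ ‖P N ^ k N - A ^ k N‖ + (‖A ^ k N - E ^ k N‖
            + ‖E ^ k N - NormedSpace.exp (t • Q)‖) := by
          have := norm_sub_le_norm_sub_add_norm_sub (A ^ k N) (E ^ k N)
            (NormedSpace.exp (t • Q))
          linarith
      _ ≤ g N := by
          rw [hgdef]
          have h3 : ‖E ^ k N - NormedSpace.exp (t • Q)‖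
              = ‖NormedSpace.exp (((k N : ℝ) * c N) • Q) - NormedSpace.exp (t • Q)‖ := by
            rw [hEdef, hEpow N]
          dsimp only
          rw [← hAdef]
          linarith [hT1, hT2, h3.le, h3.ge]
  refine tendsto_iff_norm_sub_tendsto_zero.2 ?_
  exact squeeze_zero' (Eventually.of_forall fun N => norm_nonneg _) hbound hg
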